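/- Let G be a finite simple connected graph and μ ∈ V(G). Then μ is a median-consistent vertex of G if and only if μ is a median-consistent vertex of every μ-convex subgraph H of G (where median-consistency of μ in H means |I_H(μ,v,w)| = 1 for all v,w ∈ V(H)). -/

import Mathlib

open SimpleGraph

/-- `z` lies on some shortest path connecting `u` and `v` in the graph `G`,
i.e. `z ∈ I(u,v)`. -/
def OnShortestPath {V : Type*} (G : SimpleGraph V) (u v z : V) : Prop :=
  ∃ p : G.Walk u v, p.length = G.dist u v ∧ z ∈ p.support

/-- `m` is a median point of the triple `u, v, w`, i.e. `m ∈ I(u,v) ∩ I(u,w) ∩ I(v,w)`. -/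
def IsMedianPt {V : Type*} (G : SimpleGraph V) (u v w m : V) : Prop :=
  OnShortestPath G u v m ∧ OnShortestPath G u w m ∧ OnShortestPath G v w m

/-- `μ` is a median-consistent (medico) vertex of `G`:
`|I(μ,v,w)| = 1` for all vertices `v, w`. -/
def Medico {V : Type*} (G : SimpleGraph V) (μ : V) : Prop :=
  ∀ v w : V, ∃! m : V, IsMedianPt G μ v w m

/-- A subgraph `H` of `G` is `v`-convex: `v ∈ V(H)` and every shortest path in `G`
connecting `v` and a vertex `x` of `H` is contained in `H`. -/
def VConvex {V : Type*} (G : SimpleGraph V) (H : G.Subgraph) (v : V) : Prop :=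
  v ∈ H.verts ∧
    ∀ x ∈ H.verts, ∀ p : G.Walk v x, p.length = G.dist v x → p.toSubgraph ≤ H

namespace Stmt14Aux

variable {V : Type*} {G : SimpleGraph V} {H : G.Subgraph}

/-- Lift a walk contained in a subgraph to a walk in the coercion graph. -/
lemma lift_walk : ∀ {a b : V} (p : G.Walk a b), p.toSubgraph ≤ H →
    ∀ (ha : a ∈ H.verts) (hb : b ∈ H.verts),
    ∃ q : H.coe.Walk ⟨a, ha⟩ ⟨b, hb⟩, q.map H.hom = p := by
  intro a b p
  induction p with
  | nil =>
    intro _ ha hb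
    exact ⟨Walk.nil, rfl⟩
  | @cons a c b h p ih =>
    intro hp ha hb
    have hp' : p.toSubgraph ≤ H := le_trans le_sup_right hp
    have hc : c ∈ H.verts := hp'.1 p.start_mem_verts_toSubgraph
    have hadj : H.Adj a c := hp.2 (by simp)
    obtain ⟨q, hq⟩ := ih hp' hc hb
    exact ⟨Walk.cons (show H.coe.Adj ⟨a, ha⟩ ⟨c, hc⟩ from hadj) q, by simp [hq]⟩

lemma support_lift {a b : V} {ha : a ∈ H.verts} {hb : b ∈ H.verts}
    {q : H.coe.Walk ⟨a, ha⟩ ⟨b, hb⟩} {p : G.Walk a b} (hq : q.map H.hom = p)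
    {z : V} (hz : z ∈ p.support) (hzH : z ∈ H.verts) :
    (⟨z, hzH⟩ : H.verts) ∈ q.support := by
  rw [← hq] at hz
  replace hz := (congrArg (z ∈ ·) (Walk.support_map H.hom q)).mp hz
  obtain ⟨z', hz', he⟩ := List.mem_map.1 hz
  exact (show (⟨z, hzH⟩ : H.verts) = z' from Subtype.ext he.symm) ▸ hz'

/-- A shortest `G`-walk contained in `H` witnesses that the `H`-distance equals
the `G`-distance. -/
lemma dist_coe_eq {a b : V} (ha : a ∈ H.verts) (hb : b ∈ H.verts)
    (p : G.Walk a b) (hlen : p.length = G.dist a b) (hsub : p.toSubgraph ≤ H) :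
    H.coe.dist ⟨a, ha⟩ ⟨b, hb⟩ = G.dist a b := by
  obtain ⟨q, hq⟩ := lift_walk p hsub ha hb
  have hlq : q.length = G.dist a b := by
    rw [← hlen, ← hq]; exact (Walk.length_map H.hom q).symm
  have h1 : H.coe.dist ⟨a, ha⟩ ⟨b, hb⟩ ≤ G.dist a b := hlq ▸ SimpleGraph.dist_le q
  have h2 : G.dist a b ≤ H.coe.dist ⟨a, ha⟩ ⟨b, hb⟩ := by
    obtain ⟨r, hr⟩ := (q.reachable).exists_walk_length_eq_dist
    calc G.dist a b ≤ (r.map H.hom).length := SimpleGraph.dist_le _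
      _ = H.coe.dist ⟨a, ha⟩ ⟨b, hb⟩ := by rw [Walk.length_map, hr]
  omega

lemma onH {a b z : V} (ha : a ∈ H.verts) (hb : b ∈ H.verts) (hz : z ∈ H.verts)
    (p : G.Walk a b) (hlen : p.length = G.dist a b) (hsub : p.toSubgraph ≤ H)
    (hzp : z ∈ p.support) :
    OnShortestPath H.coe ⟨a, ha⟩ ⟨b, hb⟩ ⟨z, hz⟩ := by
  obtain ⟨q, hq⟩ := lift_walk p hsub ha hb
  refine ⟨q, ?_, support_lift hq hzp hz⟩
  rw [dist_coe_eq ha hb p hlen hsub, ← hlen, ← hq]; exact (Walk.length_map H.hom q).symm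

lemma osp_map {x y z : H.verts}
    (hd : H.coe.dist x y = G.dist x.val y.val)
    (h : OnShortestPath H.coe x y z) : OnShortestPath G x.val y.val z.val := by
  obtain ⟨s, hs, hzs⟩ := h
  exact ⟨s.map H.hom, (Walk.length_map H.hom s).trans (hs.trans hd),
    (congrArg (z.val ∈ ·) (Walk.support_map H.hom s)).mpr (List.mem_map.2 ⟨z, hzs, rfl⟩)⟩

lemma seg [DecidableEq V] {u v m : V} (hconn : G.Connected) (p : G.Walk u v)
    (hp : p.length = G.dist u v) (hm : m ∈ p.support) :
    (p.takeUntil m hm).length = G.dist u m ∧ (p.dropUntil m hm).length = G.dist m v := by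
  have h1 := SimpleGraph.dist_le (p.takeUntil m hm)
  have h2 := SimpleGraph.dist_le (p.dropUntil m hm)
  have h3 : (p.takeUntil m hm).length + (p.dropUntil m hm).length = p.length := by
    have := congrArg Walk.length (p.take_spec hm)
    rwa [Walk.length_append] at this
  have h4 := hconn.dist_triangle (u := u) (v := m) (w := v)
  omega

lemma drop_sub [DecidableEq V] {u v m : V} (p : G.Walk u v) (hm : m ∈ p.support) :
    (p.dropUntil m hm).toSubgraph ≤ p.toSubgraph := by
  have h : (p.takeUntil m hm).toSubgraph ⊔ (p.dropUntil m hm).toSubgraph = p.toSubgraph := by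
    rw [← Walk.toSubgraph_append, p.take_spec hm]
  exact le_trans le_sup_right h.le

end Stmt14Aux

open Stmt14Aux in
/-- A vertex `μ` of a finite connected graph `G` is a medico vertex of
`G` iff `μ` is a medico vertex of every `μ`-convex subgraph `H` of `G` (median
consistency in `H` being taken with respect to the intervals of `H`). -/
theorem stmt14 {V : Type*} [Fintype V] (G : SimpleGraph V) (hconn : G.Connected)
    (μ : V) :
    Medico G μ ↔
      ∀ (H : G.Subgraph) (hH : VConvex G H μ),
        ∀ v w : H.verts, ∃! m : H.verts, IsMedianPt H.coe ⟨μ, hH.1⟩ v w m := by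
  classical
  constructor
  · intro hG H hH v w
    obtain ⟨m, ⟨⟨p1, hp1, hm1⟩, ⟨p2, hp2, hm2⟩, ⟨p3, hp3, hm3⟩⟩, huniq⟩ := hG v.val w.val
    have hμ : μ ∈ H.verts := hH.1
    have hs1 : p1.toSubgraph ≤ H := hH.2 v.val v.2 p1 hp1
    have hs2 : p2.toSubgraph ≤ H := hH.2 w.val w.2 p2 hp2
    have hmH : m ∈ H.verts := hs1.1 (p1.mem_verts_toSubgraph.2 hm1)
    -- distances via segments
    have hseg1 := seg hconn p1 hp1 hm1
    have hseg2 := seg hconn p2 hp2 hm2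
    have hseg3 := seg hconn p3 hp3 hm3
    -- build a shortest v-w walk through m inside H
    set r1 := p1.dropUntil m hm1 with hr1
    set r2 := p2.dropUntil m hm2 with hr2
    have hr1sub : r1.toSubgraph ≤ H := le_trans (drop_sub p1 hm1) hs1
    have hr2sub : r2.toSubgraph ≤ H := le_trans (drop_sub p2 hm2) hs2
    set q3 : G.Walk v.val w.val := r1.reverse.append r2 with hq3
    have hq3len : q3.length = G.dist v.val w.val := by
      have h3 : (p3.takeUntil m hm3).length + (p3.dropUntil m hm3).length = p3.length := by
        have := congrArg Walk.length (p3.take_spec hm3)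
        rwa [Walk.length_append] at this
    -- q3.length = r1.length + r2.length = dist m v + dist m w = dist v m + dist m w
      have hcomm : G.dist m v.val = G.dist v.val m := G.dist_comm ..
      rw [hq3, Walk.length_append, Walk.length_reverse, hseg1.2, hseg2.2, hcomm,
        ← hseg3.1, ← hseg3.2, ← hp3]
      exact h3
    have hq3sub : q3.toSubgraph ≤ H := by
      rw [hq3, Walk.toSubgraph_append, Walk.toSubgraph_reverse]
      exact sup_le hr1sub hr2sub
    have hmq3 : m ∈ q3.support := by
      rw [hq3, Walk.mem_support_append_iff]
      exact Or.inr r2.start_mem_support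
    -- distance equalities in H
    have hd1 := dist_coe_eq hμ v.2 p1 hp1 hs1
    have hd2 := dist_coe_eq hμ w.2 p2 hp2 hs2
    have hd3 := dist_coe_eq v.2 w.2 q3 hq3len hq3sub
    refine ⟨⟨m, hmH⟩, ⟨?_, ?_, ?_⟩, ?_⟩
    · exact onH hμ v.2 hmH p1 hp1 hs1 hm1
    · exact onH hμ w.2 hmH p2 hp2 hs2 hm2
    · exact onH v.2 w.2 hmH q3 hq3len hq3sub hmq3
    · rintro ⟨m', hm'H⟩ ⟨h1, h2, h3⟩
      have hG1 : OnShortestPath G μ v.val m' := osp_map hd1 h1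
      have hG2 : OnShortestPath G μ w.val m' := osp_map hd2 h2
      have hG3 : OnShortestPath G v.val w.val m' := osp_map hd3 h3
      exact Subtype.ext (huniq m' ⟨hG1, hG2, hG3⟩)
  · intro h v w
    have hHc : VConvex G ⊤ μ := ⟨Set.mem_univ _, fun _ _ _ _ => le_top⟩
    obtain ⟨m, ⟨h1, h2, h3⟩, huniq⟩ := h ⊤ hHc ⟨v, Set.mem_univ _⟩ ⟨w, Set.mem_univ _⟩
    have hdist : ∀ a b : V, (⊤ : G.Subgraph).coe.dist ⟨a, Set.mem_univ _⟩ ⟨b, Set.mem_univ _⟩ = G.dist a b := by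
      intro a b
      obtain ⟨p, hp⟩ := (hconn a b).exists_walk_length_eq_dist
      exact dist_coe_eq (Set.mem_univ _) (Set.mem_univ _) p hp le_top
    refine ⟨m.val, ⟨osp_map (hdist μ v) h1, osp_map (hdist μ w) h2,
      osp_map (hdist v w) h3⟩, ?_⟩
    rintro m' ⟨⟨q1, hq1, hm1⟩, ⟨q2, hq2, hm2⟩, ⟨q3, hq3, hm3⟩⟩
    have := huniq ⟨m', Set.mem_univ _⟩ ⟨onH (Set.mem_univ _) (Set.mem_univ _) (Set.mem_univ _) q1 hq1 le_top hm1,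
      onH (Set.mem_univ _) (Set.mem_univ _) (Set.mem_univ _) q2 hq2 le_top hm2,
      onH (Set.mem_univ _) (Set.mem_univ _) (Set.mem_univ _) q3 hq3 le_top hm3⟩
    exact congrArg Subtype.val this
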